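/- Let B ≥ 5, let j be an integer with 2 ≤ j ≤ B and (if B is even) j ≠ B/2 + 1, and let φ ∈ ℝ. Define z₁ := e^{−iφ}·F_B u_j + u_j and z₂ := e^{−iφ}·F_B v_j + v_j. Then ⟨z₁, z₂⟩ = 0, ‖z₁‖² = 4 + (8/√B)·cos φ·cos(2π(j−1)²/B), and ‖z₂‖² = 4 + (8/√B)·sin φ·sin(2π(j−1)²/B). -/

import Mathlib

open Matrix

noncomputable section

/-- The `B × B` Fourier transform matrix. -/
def fourierMat (B : ℕ) : Matrix (Fin B) (Fin B) ℂ :=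
  Matrix.of fun j k =>
    (1 / Real.sqrt B : ℝ) *
      Complex.exp (2 * Real.pi * Complex.I * (j : ℕ) * (k : ℕ) / B)

/-- The vector `u_j` (1-based position `j`): entries `1` in positions `j` and
`B + 2 − j`, zero elsewhere. -/
def uvec (B j : ℕ) : Fin B → ℂ := fun m =>
  if (m : ℕ) = j - 1 ∨ (m : ℕ) = B + 1 - j then 1 else 0

/-- The vector `v_j`: entry `1` in position `j`, `−1` in position `B + 2 − j`,
zero elsewhere. -/
def vvec (B j : ℕ) : Fin B → ℂ := fun m =>
  if (m : ℕ) = j - 1 then 1 else if (m : ℕ) = B + 1 - j then -1 else 0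

lemma exp_congr_mod (B : ℕ) (hB : 0 < B) (m n : ℤ) (h : (B:ℤ) ∣ m - n) :
    Complex.exp (2 * Real.pi * Complex.I * m / B) =
      Complex.exp (2 * Real.pi * Complex.I * n / B) := by
  obtain ⟨k, hk⟩ := h
  have hm : (m : ℂ) = n + B * k := by
    have : (m : ℤ) = n + B * k := by linarith
    exact_mod_cast congrArg (Int.cast : ℤ → ℂ) this
  have hBne : (B : ℂ) ≠ 0 := by exact_mod_cast hB.ne'
  rw [hm]
  rw [show 2 * (Real.pi:ℂ) * Complex.I * ((n:ℂ) + B * k) / B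
      = 2 * Real.pi * Complex.I * n / B + (k : ℤ) * (2 * Real.pi * Complex.I) by
    field_simp]
  rw [Complex.exp_add, Complex.exp_int_mul_two_pi_mul_I, mul_one]

lemma fourier_entry (B : ℕ) (x y : Fin B) :
    fourierMat B x y = (1 / Real.sqrt B : ℝ) *
      Complex.exp (2 * Real.pi * Complex.I * ((x : ℕ) * (y : ℕ) : ℕ) / B) := by
  simp only [fourierMat, Matrix.of_apply]
  congr 1
  push_cast
  ring_nf

lemma fourier_orth (B : ℕ) (hB : 0 < B) (x y : Fin B) :
    ∑ i, starRingEnd ℂ (fourierMat B i x) * fourierMat B i y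
      = if x = y then 1 else 0 := by
  have hBR : (0:ℝ) < B := by exact_mod_cast hB
  have hBne : (B : ℂ) ≠ 0 := by exact_mod_cast hB.ne'
  set ζ : ℂ := Complex.exp (2 * Real.pi * Complex.I * ((y:ℤ) - (x:ℤ)) / B) with hζ
  have hterm : ∀ i : Fin B, starRingEnd ℂ (fourierMat B i x) * fourierMat B i y
      = (1 / B : ℝ) * ζ ^ (i : ℕ) := by
    intro i
    simp only [fourierMat, Matrix.of_apply, _root_.map_mul, Complex.conj_ofReal]
    rw [← Complex.exp_conj]
    have hconj : (starRingEnd ℂ) (2 * (Real.pi:ℂ) * Complex.I * (i:ℕ) * (x:ℕ) / B)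
        = -(2 * (Real.pi:ℂ) * Complex.I * (i:ℕ) * (x:ℕ) / B) := by
      have hre : (2 * (Real.pi:ℂ) * Complex.I * (i:ℕ) * (x:ℕ) / B)
          = ((2 * Real.pi * (i:ℕ) * (x:ℕ) / B : ℝ) : ℂ) * Complex.I := by
        push_cast; ring
      rw [hre, _root_.map_mul, Complex.conj_ofReal, Complex.conj_I]
      ring
    rw [hconj]
    have hpow : ζ ^ (i:ℕ) = Complex.exp (2 * Real.pi * Complex.I * ((y:ℤ) - (x:ℤ)) * (i:ℕ) / B) := by
      rw [hζ, ← Complex.exp_nat_mul]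
      congr 1
      ring
    rw [hpow]
    have hr : ((1 / Real.sqrt B : ℝ) : ℂ) * ((1 / Real.sqrt B : ℝ) : ℂ) = ((1 / B : ℝ) : ℂ) := by
      rw [← Complex.ofReal_mul]
      congr 1
      rw [div_mul_div_comm, one_mul, Real.mul_self_sqrt hBR.le]
    calc ((1 / Real.sqrt B : ℝ) : ℂ) * Complex.exp (-(2 * (Real.pi:ℂ) * Complex.I * (i:ℕ) * (x:ℕ) / B)) *
          (((1 / Real.sqrt B : ℝ) : ℂ) * Complex.exp (2 * Real.pi * Complex.I * (i:ℕ) * (y:ℕ) / B))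
        = (((1 / Real.sqrt B : ℝ) : ℂ) * ((1 / Real.sqrt B : ℝ) : ℂ)) *
          (Complex.exp (-(2 * (Real.pi:ℂ) * Complex.I * (i:ℕ) * (x:ℕ) / B)) *
           Complex.exp (2 * Real.pi * Complex.I * (i:ℕ) * (y:ℕ) / B)) := by ring
      _ = ((1 / B : ℝ) : ℂ) * Complex.exp (2 * Real.pi * Complex.I * ((y:ℤ) - (x:ℤ)) * (i:ℕ) / B) := by
          rw [hr, ← Complex.exp_add]
          congr 2
          push_cast
          field_simp
          ring
  rw [Finset.sum_congr rfl fun i _ => hterm i, ← Finset.mul_sum,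
    Fin.sum_univ_eq_sum_range (fun n => ζ ^ n) B]
  by_cases hxy : x = y
  · have h1 : ζ = 1 := by rw [hζ, hxy]; simp
    rw [h1, if_pos hxy]
    simp only [one_pow, Finset.sum_const, Finset.card_range, nsmul_eq_mul, mul_one]
    push_cast
    field_simp
  · have hζB : ζ ^ B = 1 := by
      rw [hζ, ← Complex.exp_nat_mul]
      rw [show (B:ℂ) * (2 * Real.pi * Complex.I * ((y:ℤ) - (x:ℤ)) / B)
          = ((y:ℤ) - (x:ℤ)) * (2 * Real.pi * Complex.I) by field_simp]
      exact_mod_cast Complex.exp_int_mul_two_pi_mul_I ((y:ℤ) - (x:ℤ))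
    have hζne : ζ ≠ 1 := by
      intro h1
      rw [hζ, Complex.exp_eq_one_iff] at h1
      obtain ⟨n, hn⟩ := h1
      have hne : (2 * (Real.pi:ℂ) * Complex.I) ≠ 0 := by
        simp [Real.pi_ne_zero, Complex.I_ne_zero]
      have key : (2 * (Real.pi:ℂ) * Complex.I) * (((y:ℤ):ℂ) - ((x:ℤ):ℂ))
          = (2 * (Real.pi:ℂ) * Complex.I) * ((n:ℂ) * B) := by
        field_simp at hn
        linear_combination (2 * (Real.pi:ℂ) * Complex.I) * hn
      have hc : (((y:ℤ):ℂ) - ((x:ℤ):ℂ)) = (n:ℂ) * B := mul_left_cancel₀ hne key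
      have hZ : (y:ℤ) - (x:ℤ) = n * B := by exact_mod_cast hc
      have hx := x.isLt; have hy := y.isLt
      have hxZ : (x:ℤ) < B := by exact_mod_cast hx
      have hyZ : (y:ℤ) < B := by exact_mod_cast hy
      have hx0 : (0:ℤ) ≤ (x:ℤ) := Int.ofNat_nonneg _
      have hy0 : (0:ℤ) ≤ (y:ℤ) := Int.ofNat_nonneg _
      have hBZ : (0:ℤ) < B := by exact_mod_cast hB
      have hn0 : n = 0 := by
        rcases lt_trichotomy n 0 with h | h | h
        · nlinarith
        · exact h
        · nlinarith
      rw [hn0] at hZ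
      simp at hZ
      exact hxy (Fin.ext (by omega)).symm
    rw [geom_sum_eq hζne, hζB, sub_self, zero_div, mul_zero, if_neg hxy]

lemma sum_expand (B : ℕ) (c₁ c₂ c₃ c₄ d₁ d₂ d₃ d₄ : ℂ) (f₁ f₂ f₃ f₄ : Fin B → ℂ)
    (S₁₁ S₁₂ S₁₃ S₁₄ S₂₁ S₂₂ S₂₃ S₂₄ S₃₁ S₃₂ S₃₃ S₃₄ S₄₁ S₄₂ S₄₃ S₄₄ : ℂ)
    (h₁₁ : ∑ i, starRingEnd ℂ (f₁ i) * f₁ i = S₁₁)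
    (h₁₂ : ∑ i, starRingEnd ℂ (f₁ i) * f₂ i = S₁₂)
    (h₁₃ : ∑ i, starRingEnd ℂ (f₁ i) * f₃ i = S₁₃)
    (h₁₄ : ∑ i, starRingEnd ℂ (f₁ i) * f₄ i = S₁₄)
    (h₂₁ : ∑ i, starRingEnd ℂ (f₂ i) * f₁ i = S₂₁)
    (h₂₂ : ∑ i, starRingEnd ℂ (f₂ i) * f₂ i = S₂₂)
    (h₂₃ : ∑ i, starRingEnd ℂ (f₂ i) * f₃ i = S₂₃)
    (h₂₄ : ∑ i, starRingEnd ℂ (f₂ i) * f₄ i = S₂₄)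
    (h₃₁ : ∑ i, starRingEnd ℂ (f₃ i) * f₁ i = S₃₁)
    (h₃₂ : ∑ i, starRingEnd ℂ (f₃ i) * f₂ i = S₃₂)
    (h₃₃ : ∑ i, starRingEnd ℂ (f₃ i) * f₃ i = S₃₃)
    (h₃₄ : ∑ i, starRingEnd ℂ (f₃ i) * f₄ i = S₃₄)
    (h₄₁ : ∑ i, starRingEnd ℂ (f₄ i) * f₁ i = S₄₁)
    (h₄₂ : ∑ i, starRingEnd ℂ (f₄ i) * f₂ i = S₄₂)
    (h₄₃ : ∑ i, starRingEnd ℂ (f₄ i) * f₃ i = S₄₃)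
    (h₄₄ : ∑ i, starRingEnd ℂ (f₄ i) * f₄ i = S₄₄) :
    ∑ i, starRingEnd ℂ (c₁ * f₁ i + c₂ * f₂ i + c₃ * f₃ i + c₄ * f₄ i) *
        (d₁ * f₁ i + d₂ * f₂ i + d₃ * f₃ i + d₄ * f₄ i)
      = starRingEnd ℂ c₁ * d₁ * S₁₁ + starRingEnd ℂ c₁ * d₂ * S₁₂
        + starRingEnd ℂ c₁ * d₃ * S₁₃ + starRingEnd ℂ c₁ * d₄ * S₁₄
        + starRingEnd ℂ c₂ * d₁ * S₂₁ + starRingEnd ℂ c₂ * d₂ * S₂₂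
        + starRingEnd ℂ c₂ * d₃ * S₂₃ + starRingEnd ℂ c₂ * d₄ * S₂₄
        + starRingEnd ℂ c₃ * d₁ * S₃₁ + starRingEnd ℂ c₃ * d₂ * S₃₂
        + starRingEnd ℂ c₃ * d₃ * S₃₃ + starRingEnd ℂ c₃ * d₄ * S₃₄
        + starRingEnd ℂ c₄ * d₁ * S₄₁ + starRingEnd ℂ c₄ * d₂ * S₄₂
        + starRingEnd ℂ c₄ * d₃ * S₄₃ + starRingEnd ℂ c₄ * d₄ * S₄₄ := by
  subst h₁₁ h₁₂ h₁₃ h₁₄ h₂₁ h₂₂ h₂₃ h₂₄ h₃₁ h₃₂ h₃₃ h₃₄ h₄₁ h₄₂ h₄₃ h₄₄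
  have hpt : ∀ i : Fin B,
      starRingEnd ℂ (c₁ * f₁ i + c₂ * f₂ i + c₃ * f₃ i + c₄ * f₄ i) *
        (d₁ * f₁ i + d₂ * f₂ i + d₃ * f₃ i + d₄ * f₄ i)
      = starRingEnd ℂ c₁ * d₁ * (starRingEnd ℂ (f₁ i) * f₁ i)
        + starRingEnd ℂ c₁ * d₂ * (starRingEnd ℂ (f₁ i) * f₂ i)
        + starRingEnd ℂ c₁ * d₃ * (starRingEnd ℂ (f₁ i) * f₃ i)
        + starRingEnd ℂ c₁ * d₄ * (starRingEnd ℂ (f₁ i) * f₄ i)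
        + starRingEnd ℂ c₂ * d₁ * (starRingEnd ℂ (f₂ i) * f₁ i)
        + starRingEnd ℂ c₂ * d₂ * (starRingEnd ℂ (f₂ i) * f₂ i)
        + starRingEnd ℂ c₂ * d₃ * (starRingEnd ℂ (f₂ i) * f₃ i)
        + starRingEnd ℂ c₂ * d₄ * (starRingEnd ℂ (f₂ i) * f₄ i)
        + starRingEnd ℂ c₃ * d₁ * (starRingEnd ℂ (f₃ i) * f₁ i)
        + starRingEnd ℂ c₃ * d₂ * (starRingEnd ℂ (f₃ i) * f₂ i)
        + starRingEnd ℂ c₃ * d₃ * (starRingEnd ℂ (f₃ i) * f₃ i)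
        + starRingEnd ℂ c₃ * d₄ * (starRingEnd ℂ (f₃ i) * f₄ i)
        + starRingEnd ℂ c₄ * d₁ * (starRingEnd ℂ (f₄ i) * f₁ i)
        + starRingEnd ℂ c₄ * d₂ * (starRingEnd ℂ (f₄ i) * f₂ i)
        + starRingEnd ℂ c₄ * d₃ * (starRingEnd ℂ (f₄ i) * f₃ i)
        + starRingEnd ℂ c₄ * d₄ * (starRingEnd ℂ (f₄ i) * f₄ i) := by
    intro i
    simp only [map_add, _root_.map_mul]
    ring
  rw [Finset.sum_congr rfl fun i _ => hpt i]
  simp only [Finset.sum_add_distrib, ← Finset.mul_sum]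

theorem perturbed_eigenvector_norms (B j : ℕ) (hB : 5 ≤ B)
    (hj2 : 2 ≤ j) (hjB : j ≤ B) (hjhalf : Even B → j ≠ B / 2 + 1)
    (φ : ℝ)
    (z₁ z₂ : Fin B → ℂ)
    (hz₁ : z₁ = Complex.exp (-(Complex.I * φ)) •
      (fourierMat B).mulVec (uvec B j) + uvec B j)
    (hz₂ : z₂ = Complex.exp (-(Complex.I * φ)) •
      (fourierMat B).mulVec (vvec B j) + vvec B j) :
    (∑ i, starRingEnd ℂ (z₁ i) * z₂ i) = 0 ∧
    (∑ i, ‖z₁ i‖ ^ 2) =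
      4 + 8 / Real.sqrt B * Real.cos φ *
        Real.cos (2 * Real.pi * ((j : ℝ) - 1) ^ 2 / B) ∧
    (∑ i, ‖z₂ i‖ ^ 2) =
      4 + 8 / Real.sqrt B * Real.sin φ *
        Real.sin (2 * Real.pi * ((j : ℝ) - 1) ^ 2 / B) := by
  have hB0 : 0 < B := by omega
  set n : ℕ := j - 1 with hn
  have ha' : n < B := by omega
  have hb' : B + 1 - j < B := by omega
  set a : Fin B := ⟨n, ha'⟩ with hadef
  set b : Fin B := ⟨B + 1 - j, hb'⟩ with hbdef
  have hab : a ≠ b := by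
    intro h
    have h2 : n = B + 1 - j := congrArg Fin.val h
    rcases Nat.even_or_odd B with he | ho
    · have := hjhalf he
      rw [Nat.even_iff] at he
      omega
    · rw [Nat.odd_iff] at ho
      omega
  have hbval : (b : ℕ) = B - n := by simp [hbdef]; omega
  have hu : ∀ m : Fin B, uvec B j m
      = (if m = a then (1:ℂ) else 0) + (if m = b then (1:ℂ) else 0) := by
    intro m
    have e1 : ((m : ℕ) = j - 1) ↔ (m = a) := by rw [Fin.ext_iff]
    have e2 : ((m : ℕ) = B + 1 - j) ↔ (m = b) := by rw [Fin.ext_iff]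
    simp only [uvec, e1, e2]
    by_cases h1 : m = a <;> by_cases h2 : m = b <;>
      simp [h1, h2, hab, Ne.symm hab]
  have hv : ∀ m : Fin B, vvec B j m
      = (if m = a then (1:ℂ) else 0) + (-1) * (if m = b then (1:ℂ) else 0) := by
    intro m
    have e1 : ((m : ℕ) = j - 1) ↔ (m = a) := by rw [Fin.ext_iff]
    have e2 : ((m : ℕ) = B + 1 - j) ↔ (m = b) := by rw [Fin.ext_iff]
    simp only [vvec, e1, e2]
    by_cases h1 : m = a <;> by_cases h2 : m = b <;>
      simp [h1, h2, hab, Ne.symm hab]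
  have hFu : ∀ i : Fin B, (fourierMat B).mulVec (uvec B j) i
      = fourierMat B i a + fourierMat B i b := by
    intro i
    simp only [Matrix.mulVec, dotProduct]
    rw [Finset.sum_congr rfl fun k _ => by rw [hu k]]
    simp [mul_add, Finset.sum_add_distrib, mul_ite, mul_one, mul_zero,
      Finset.sum_ite_eq', Finset.mem_univ]
  have hFv : ∀ i : Fin B, (fourierMat B).mulVec (vvec B j) i
      = fourierMat B i a - fourierMat B i b := by
    intro i
    simp only [Matrix.mulVec, dotProduct]
    rw [Finset.sum_congr rfl fun k _ => by rw [hv k]]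
    simp [mul_add, Finset.sum_add_distrib, mul_ite, mul_one, mul_zero,
      Finset.sum_ite_eq', Finset.mem_univ]
    ring
  -- entry values
  set r : ℂ := ((1 / Real.sqrt B : ℝ) : ℂ) with hr
  set θ : ℝ := 2 * Real.pi * (n:ℝ)^2 / B with hθ
  set E : ℂ := Complex.exp ((θ:ℂ) * Complex.I) with hE
  set Em : ℂ := Complex.exp (-(θ:ℂ) * Complex.I) with hEm
  have hnat : ∀ m : ℕ, Complex.exp (2 * Real.pi * Complex.I * (m:ℕ) / B)
      = Complex.exp (2 * Real.pi * Complex.I * ((m:ℤ)) / B) := by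
    intro m; norm_cast
  have haval : (a : ℕ) = n := rfl
  have hFaa : fourierMat B a a = r * E := by
    rw [fourier_entry, hr, hE]
    congr 1
    rw [haval, hθ]
    push_cast
    ring
  have hFab : fourierMat B a b = r * Em := by
    rw [fourier_entry, hr, hEm, hnat]
    have e1 : (1 + B - j : ℕ) = B - n := by omega
    have e2 : (B + 1 - j : ℕ) = B - n := by omega
    rw [exp_congr_mod B hB0 _ (-(n^2:ℤ))
      ⟨n, by push_cast [haval, hbval, e1, e2, Nat.cast_sub ha'.le]; ring⟩]
    rw [hθ]
    push_cast
    ring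
  have hFba : fourierMat B b a = r * Em := by
    rw [fourier_entry, Nat.mul_comm, ← fourier_entry, hFab]
  have hFbb : fourierMat B b b = r * E := by
    rw [fourier_entry, hr, hE, hnat]
    have e1 : (1 + B - j : ℕ) = B - n := by omega
    have e2 : (B + 1 - j : ℕ) = B - n := by omega
    rw [exp_congr_mod B hB0 _ ((n^2:ℤ))
      ⟨(B:ℤ) - 2*n, by push_cast [hbval, e1, e2, Nat.cast_sub ha'.le]; ring⟩]
    rw [hθ]
    push_cast
    ring
  have hrc : starRingEnd ℂ r = r := Complex.conj_ofReal _
  have hEc : starRingEnd ℂ E = Em := by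
    rw [hE, hEm, ← Complex.exp_conj, _root_.map_mul, Complex.conj_ofReal, Complex.conj_I]
    congr 1
    ring
  have hEmc : starRingEnd ℂ Em = E := by
    rw [hE, hEm, ← Complex.exp_conj, _root_.map_mul, map_neg, Complex.conj_ofReal,
      Complex.conj_I]
    congr 1
    ring
  -- the basic 16 sums
  set F : Matrix (Fin B) (Fin B) ℂ := fourierMat B with hF
  have horth := fourier_orth B hB0
  have hS11 : ∑ i, starRingEnd ℂ (F i a) * F i a = 1 := by rw [horth a a, if_pos rfl]
  have hS12 : ∑ i, starRingEnd ℂ (F i a) * F i b = 0 := by rw [horth a b, if_neg hab]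
  have hS21 : ∑ i, starRingEnd ℂ (F i b) * F i a = 0 := by
    rw [horth b a, if_neg (Ne.symm hab)]
  have hS22 : ∑ i, starRingEnd ℂ (F i b) * F i b = 1 := by rw [horth b b, if_pos rfl]
  have hFd : ∀ x y : Fin B, ∑ i, starRingEnd ℂ (F i x) * (if i = y then (1:ℂ) else 0)
      = starRingEnd ℂ (F y x) := by
    intro x y
    simp [mul_ite, mul_one, mul_zero, Finset.sum_ite_eq', Finset.mem_univ]
  have hdF : ∀ x y : Fin B, ∑ i, starRingEnd ℂ (if i = x then (1:ℂ) else 0) * F i y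
      = F x y := by
    intro x y
    simp [apply_ite (starRingEnd ℂ), ite_mul, one_mul, zero_mul,
      Finset.sum_ite_eq', Finset.mem_univ]
  have hdd : ∀ x y : Fin B,
      ∑ i, starRingEnd ℂ (if i = x then (1:ℂ) else 0) * (if i = y then (1:ℂ) else 0)
      = if x = y then (1:ℂ) else 0 := by
    intro x y
    simp [apply_ite (starRingEnd ℂ), ite_mul, one_mul, zero_mul, mul_ite, mul_one,
      mul_zero, Finset.sum_ite_eq', Finset.mem_univ]
    simp [eq_comm]
  -- exponential coefficients
  set cm : ℂ := Complex.exp (-(φ:ℂ) * Complex.I) with hcm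
  set cp : ℂ := Complex.exp ((φ:ℂ) * Complex.I) with hcp
  have hc : Complex.exp (-(Complex.I * (φ:ℂ))) = cm := congrArg Complex.exp (by ring)
  have hcmc : starRingEnd ℂ cm = cp := by
    rw [hcm, hcp, ← Complex.exp_conj, _root_.map_mul, map_neg, Complex.conj_ofReal,
      Complex.conj_I]
    congr 1
    ring
  have hcpcm : cp * cm = 1 := by
    rw [hcp, hcm, ← Complex.exp_add,
      show (φ:ℂ) * Complex.I + -(φ:ℂ) * Complex.I = 0 by ring, Complex.exp_zero]
  -- pointwise descriptions of z₁ z₂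
  have hz1i : ∀ i : Fin B, z₁ i = cm * F i a + cm * F i b
      + 1 * (if i = a then (1:ℂ) else 0) + 1 * (if i = b then (1:ℂ) else 0) := by
    intro i
    rw [hz₁]
    simp only [Pi.add_apply, Pi.smul_apply, smul_eq_mul]
    rw [hFu i, hu i, hc]
    ring
  have hz2i : ∀ i : Fin B, z₂ i = cm * F i a + (-cm) * F i b
      + 1 * (if i = a then (1:ℂ) else 0) + (-1) * (if i = b then (1:ℂ) else 0) := by
    intro i
    rw [hz₂]
    simp only [Pi.add_apply, Pi.smul_apply, smul_eq_mul]
    rw [hFv i, hv i, hc]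
    ring
  -- trig facts
  have hcosφ : Complex.cos (φ:ℂ) = (cp + cm) / 2 := by
    have h := Complex.two_cos (φ:ℂ)
    rw [hcp, hcm]
    linear_combination h / 2
  have hsinφ : Complex.sin (φ:ℂ) = (cm - cp) * Complex.I / 2 := by
    have h := Complex.two_sin (φ:ℂ)
    rw [hcp, hcm]
    linear_combination h / 2
  have hcosθ : Complex.cos (θ:ℂ) = (E + Em) / 2 := by
    have h := Complex.two_cos (θ:ℂ)
    rw [hE, hEm]
    linear_combination h / 2
  have hsinθ : Complex.sin (θ:ℂ) = (Em - E) * Complex.I / 2 := by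
    have h := Complex.two_sin (θ:ℂ)
    rw [hE, hEm]
    linear_combination h / 2
  have hI2 : (Complex.I) ^ 2 = -1 := Complex.I_sq
  -- the three complex sums
  have key0 : ∑ i, starRingEnd ℂ (z₁ i) * z₂ i = 0 := by
    calc ∑ i, starRingEnd ℂ (z₁ i) * z₂ i
        = ∑ i, starRingEnd ℂ (cm * F i a + cm * F i b
            + 1 * (if i = a then (1:ℂ) else 0) + 1 * (if i = b then (1:ℂ) else 0))
          * (cm * F i a + (-cm) * F i b
            + 1 * (if i = a then (1:ℂ) else 0) + (-1) * (if i = b then (1:ℂ) else 0)) :=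
          Finset.sum_congr rfl fun i _ => by rw [hz1i i, hz2i i]
      _ = _ := sum_expand B cm cm 1 1 cm (-cm) 1 (-1)
            (fun i => F i a) (fun i => F i b)
            (fun i => if i = a then (1:ℂ) else 0) (fun i => if i = b then (1:ℂ) else 0)
            _ _ _ _ _ _ _ _ _ _ _ _ _ _ _ _
            hS11 hS12 (hFd a a) (hFd a b) hS21 hS22 (hFd b a) (hFd b b)
            (hdF a a) (hdF a b) (hdd a a) (hdd a b)
            (hdF b a) (hdF b b) (hdd b a) (hdd b b)
      _ = 0 := by
          rw [hFaa, hFab, hFba, hFbb]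
          simp only [_root_.map_mul, _root_.map_one, map_neg, hrc, hEc, hEmc, hcmc,
            eq_self_iff_true, if_true, if_pos rfl, if_neg hab, if_neg (Ne.symm hab)]
          ring
  have key1 : ∑ i, starRingEnd ℂ (z₁ i) * z₁ i
      = (4:ℂ) + 8 * r * Complex.cos (φ:ℂ) * Complex.cos (θ:ℂ) := by
    calc ∑ i, starRingEnd ℂ (z₁ i) * z₁ i
        = ∑ i, starRingEnd ℂ (cm * F i a + cm * F i b
            + 1 * (if i = a then (1:ℂ) else 0) + 1 * (if i = b then (1:ℂ) else 0))
          * (cm * F i a + cm * F i b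
            + 1 * (if i = a then (1:ℂ) else 0) + 1 * (if i = b then (1:ℂ) else 0)) :=
          Finset.sum_congr rfl fun i _ => by rw [hz1i i]
      _ = _ := sum_expand B cm cm 1 1 cm cm 1 1
            (fun i => F i a) (fun i => F i b)
            (fun i => if i = a then (1:ℂ) else 0) (fun i => if i = b then (1:ℂ) else 0)
            _ _ _ _ _ _ _ _ _ _ _ _ _ _ _ _
            hS11 hS12 (hFd a a) (hFd a b) hS21 hS22 (hFd b a) (hFd b b)
            (hdF a a) (hdF a b) (hdd a a) (hdd a b)
            (hdF b a) (hdF b b) (hdd b a) (hdd b b)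
      _ = (4:ℂ) + 8 * r * Complex.cos (φ:ℂ) * Complex.cos (θ:ℂ) := by
          rw [hFaa, hFab, hFba, hFbb, hcosφ, hcosθ]
          simp only [_root_.map_mul, _root_.map_one, map_neg, hrc, hEc, hEmc, hcmc,
            eq_self_iff_true, if_true, if_pos rfl, if_neg hab, if_neg (Ne.symm hab)]
          linear_combination 2 * hcpcm
  have key2 : ∑ i, starRingEnd ℂ (z₂ i) * z₂ i
      = (4:ℂ) + 8 * r * Complex.sin (φ:ℂ) * Complex.sin (θ:ℂ) := by
    calc ∑ i, starRingEnd ℂ (z₂ i) * z₂ i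
        = ∑ i, starRingEnd ℂ (cm * F i a + (-cm) * F i b
            + 1 * (if i = a then (1:ℂ) else 0) + (-1) * (if i = b then (1:ℂ) else 0))
          * (cm * F i a + (-cm) * F i b
            + 1 * (if i = a then (1:ℂ) else 0) + (-1) * (if i = b then (1:ℂ) else 0)) :=
          Finset.sum_congr rfl fun i _ => by rw [hz2i i]
      _ = _ := sum_expand B cm (-cm) 1 (-1) cm (-cm) 1 (-1)
            (fun i => F i a) (fun i => F i b)
            (fun i => if i = a then (1:ℂ) else 0) (fun i => if i = b then (1:ℂ) else 0)
            _ _ _ _ _ _ _ _ _ _ _ _ _ _ _ _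
            hS11 hS12 (hFd a a) (hFd a b) hS21 hS22 (hFd b a) (hFd b b)
            (hdF a a) (hdF a b) (hdd a a) (hdd a b)
            (hdF b a) (hdF b b) (hdd b a) (hdd b b)
      _ = (4:ℂ) + 8 * r * Complex.sin (φ:ℂ) * Complex.sin (θ:ℂ) := by
          rw [hFaa, hFab, hFba, hFbb, hsinφ, hsinθ]
          simp only [_root_.map_mul, _root_.map_one, map_neg, hrc, hEc, hEmc, hcmc,
            eq_self_iff_true, if_true, if_pos rfl, if_neg hab, if_neg (Ne.symm hab)]
          linear_combination 2 * hcpcm - 2 * r * (cm - cp) * (Em - E) * hI2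
  -- convert to the real statements
  have hθj : 2 * Real.pi * ((j : ℝ) - 1) ^ 2 / B = θ := by
    rw [hθ, hn]
    have : ((j - 1 : ℕ) : ℝ) = (j : ℝ) - 1 := by
      push_cast [Nat.cast_sub (show 1 ≤ j by omega)]
      ring
    rw [this]
  have hre : ∀ w : Fin B → ℂ, (∑ i, ‖w i‖ ^ 2 : ℝ)
      = (∑ i, starRingEnd ℂ (w i) * w i).re := by
    intro w
    rw [Complex.re_sum]
    refine Finset.sum_congr rfl fun i _ => ?_
    rw [mul_comm, Complex.mul_conj]
    simp [Complex.sq_norm]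
  refine ⟨key0, ?_, ?_⟩
  · rw [hθj, hre z₁, key1]
    have : (4:ℂ) + 8 * r * Complex.cos (φ:ℂ) * Complex.cos (θ:ℂ)
        = ((4 + 8 / Real.sqrt B * Real.cos φ * Real.cos θ : ℝ) : ℂ) := by
      rw [hr]
      push_cast [Complex.ofReal_cos]
      ring
    rw [this, Complex.ofReal_re]
  · rw [hθj, hre z₂, key2]
    have : (4:ℂ) + 8 * r * Complex.sin (φ:ℂ) * Complex.sin (θ:ℂ)
        = ((4 + 8 / Real.sqrt B * Real.sin φ * Real.sin θ : ℝ) : ℂ) := by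
      rw [hr]
      push_cast [Complex.ofReal_sin]
      ring
    rw [this, Complex.ofReal_re]

end
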